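/- Suppose char k = p > 0, n = 2, d = 2p, and H is the subgroup of GL_2(k) consisting of the diagonal matrices diag(a⁻¹, a^{2p}) for a ∈ kˣ. Let F = x₁x₂⋯x_{2p}·y_{2p} ∈ k[M_{2,2p}], i.e. the product of all the first-row variables X(0,r) (r ∈ Fin 2p) times the last second-row variable X(1, 2p−1). Then F ∈ ^H k[M_{2,2p}] but F ∉ GL_{2p} * j(^H k[M_{2,2}]). (Example in §2: the characteristic-zero polarization theorem fails for a torus in characteristic p.) -/

import Mathlib

open MvPolynomial

/-- The action of `g ∈ GL_d(k)` on `k[M_{n,d}]` by `(g * F)(x) = F(x·g)`,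
i.e. substituting `X(i,q) ↦ Σ_s X(i,s)·g(s,q)`. -/
noncomputable def colAct {k : Type*} [Field k] {n d : ℕ} (g : GL (Fin d) k) :
    MvPolynomial (Fin n × Fin d) k →ₐ[k] MvPolynomial (Fin n × Fin d) k :=
  aeval fun p => ∑ s : Fin d, X (p.1, s) * C ((g : Matrix (Fin d) (Fin d) k) s p.2)

/-- The action of `h ∈ GL_n(k)` on `k[M_{n,d}]` by `(h · F)(x) = F(h⁻¹·x)`,
i.e. substituting `X(i,q) ↦ Σ_s (h⁻¹)(i,s)·X(s,q)`. -/
noncomputable def rowAct {k : Type*} [Field k] {n d : ℕ} (h : GL (Fin n) k) :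
    MvPolynomial (Fin n × Fin d) k →ₐ[k] MvPolynomial (Fin n × Fin d) k :=
  aeval fun p =>
    ∑ s : Fin n, C (((h⁻¹ : GL (Fin n) k) : Matrix (Fin n) (Fin n) k) p.1 s) * X (s, p.2)

/-- The embedding `j : k[M_{n,n}] → k[M_{n,d}]`, `X(i,q) ↦ X(i,q)`. -/
noncomputable def jmap {k : Type*} [Field k] {n d : ℕ} (hnd : n ≤ d) :
    MvPolynomial (Fin n × Fin n) k →ₐ[k] MvPolynomial (Fin n × Fin d) k :=
  aeval fun p => X (p.1, Fin.castLE hnd p.2)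

/-- `^H k[M_{n,d}]`, the subalgebra of `H`-invariant polynomials. -/
def HinvAlg {k : Type*} [Field k] {n d : ℕ} (H : Subgroup (GL (Fin n) k)) :
    Subalgebra k (MvPolynomial (Fin n × Fin d) k) where
  carrier := {F | ∀ h ∈ H, rowAct h F = F}
  mul_mem' := fun ha hb h hh => by rw [map_mul, ha h hh, hb h hh]
  add_mem' := fun ha hb h hh => by rw [map_add, ha h hh, hb h hh]
  algebraMap_mem' := fun r h hh => by simp

/-- `GL_d * j(^H k[M_{n,n}])`: the `k`-subalgebra of `k[M_{n,d}]` generated by all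
polarizations `g * (j f)` of `H`-invariants of `n` vectors. -/
noncomputable def polarized {k : Type*} [Field k] {n d : ℕ} (hnd : n ≤ d)
    (H : Subgroup (GL (Fin n) k)) : Subalgebra k (MvPolynomial (Fin n × Fin d) k) :=
  Algebra.adjoin k
    {F | ∃ g : GL (Fin d) k, ∃ f ∈ HinvAlg (d := n) H, F = colAct g (jmap hnd f)}

/-- The subgroup of `GL_2(k)` of diagonal matrices `diag(a⁻¹, a^{2p})`, `a ∈ kˣ`. -/
def torusH (k : Type*) [Field k] (p : ℕ) : Subgroup (GL (Fin 2) k) where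
  carrier := {h | ∃ a : kˣ, (h : Matrix (Fin 2) (Fin 2) k)
      = Matrix.diagonal ![((a⁻¹ : kˣ) : k), (a : k) ^ (2 * p)]}
  one_mem' := ⟨1, by
    ext i j
    fin_cases i <;> fin_cases j <;> simp [Matrix.diagonal, Matrix.one_apply]⟩
  mul_mem' := by
    rintro u v ⟨a, ha⟩ ⟨b, hb⟩
    refine ⟨a * b, ?_⟩
    rw [Units.val_mul, ha, hb, Matrix.diagonal_mul_diagonal]
    ext i j
    fin_cases i <;> fin_cases j <;> simp [Matrix.diagonal, mul_pow, mul_inv, mul_comm]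
  inv_mem' := by
    rintro u ⟨a, ha⟩
    refine ⟨a⁻¹, ?_⟩
    have h1 : (u : Matrix (Fin 2) (Fin 2) k) *
        Matrix.diagonal ![((a⁻¹⁻¹ : kˣ) : k), ((a⁻¹ : kˣ) : k) ^ (2 * p)] = 1 := by
      rw [ha, Matrix.diagonal_mul_diagonal]
      ext i j
      fin_cases i <;> fin_cases j <;>
        simp [Matrix.diagonal, Matrix.one_apply, ← mul_pow, Units.val_inv_eq_inv_val,
          mul_inv_cancel₀, inv_mul_cancel₀, a.ne_zero]
    exact Units.inv_eq_of_mul_eq_one_right h1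


namespace Stmt9Aux

variable {k : Type*} [Field k]

lemma aeval_diag_monomial {σ : Type*} [Fintype σ] [DecidableEq σ] (t : σ → k) (v : σ →₀ ℕ) (c : k) :
    aeval (R := k) (fun x : σ => C (t x) * X x) (monomial v c)
      = monomial v (c * ∏ x : σ, t x ^ v x) := by
  rw [aeval_monomial, monomial_eq]
  have h1 : (v.prod fun x e => (C (t x) * X x : MvPolynomial σ k) ^ e)
      = (∏ x : σ, (C (t x) : MvPolynomial σ k) ^ v x) * v.prod fun x e => X x ^ e := by
    rw [Finsupp.prod_fintype _ _ (fun i => pow_zero _),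
      Finsupp.prod_fintype _ _ (fun i => pow_zero _), ← Finset.prod_mul_distrib]
    simp [mul_pow]
  rw [algebraMap_eq, h1]
  rw [show (∏ x : σ, (C (t x) : MvPolynomial σ k) ^ v x) = C (∏ x : σ, t x ^ v x) by
    rw [map_prod]; simp only [map_pow]]
  rw [map_mul]
  ring

lemma coeff_diag_aeval {σ : Type*} [Fintype σ] [DecidableEq σ] (t : σ → k)
    (f : MvPolynomial σ k) (d₀ : σ →₀ ℕ) :
    coeff d₀ (aeval (R := k) (fun x : σ => C (t x) * X x) f)
      = (∏ x : σ, t x ^ d₀ x) * coeff d₀ f := by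
  conv_lhs => rw [f.as_sum, map_sum]
  rw [coeff_sum]
  simp only [aeval_diag_monomial, coeff_monomial]
  rw [show (∑ v ∈ f.support, if v = d₀ then coeff v f * ∏ x : σ, t x ^ v x else 0)
      = if d₀ ∈ f.support then coeff d₀ f * ∏ x : σ, t x ^ d₀ x else 0 from
    Finset.sum_ite_eq' f.support d₀ _]
  split_ifs with h
  · ring
  · rw [notMem_support_iff.mp h, mul_zero]

lemma prod_X_monomial {σ ι : Type*} (s : Finset ι) (g : ι → σ) :
    (∏ i ∈ s, (X (g i) : MvPolynomial σ k)) = monomial (∑ i ∈ s, Finsupp.single (g i) 1) 1 := by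
  classical
  induction s using Finset.cons_induction with
  | empty => simp
  | cons a s ha ih => rw [Finset.prod_cons, Finset.sum_cons, ih, X, monomial_mul, one_mul]

lemma exists_pow_ne [IsAlgClosed k] {e m : ℕ} (hne : e ≠ m) :
    ∃ x : k, x ≠ 0 ∧ x ^ e ≠ x ^ m := by
  have hq : (Polynomial.X ^ e - Polynomial.X ^ m : Polynomial k) ≠ 0 := by
    intro h
    have h2 := congrArg (fun q => Polynomial.coeff q e) h
    simp only [Polynomial.coeff_sub, Polynomial.coeff_X_pow, if_pos rfl, if_neg hne] at h2
    norm_num at h2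
  have hfin : ({x : k | (Polynomial.X ^ e - Polynomial.X ^ m : Polynomial k).IsRoot x}
      ∪ {0}).Finite := by
    refine Set.Finite.union ?_ (Set.finite_singleton 0)
    by_contra hinf
    exact hq (Polynomial.eq_zero_of_infinite_isRoot _ hinf)
  obtain ⟨x, hx⟩ := hfin.infinite_compl.nonempty
  simp only [Set.mem_compl_iff, Set.mem_union, Set.mem_singleton_iff, not_or,
    Polynomial.IsRoot, Polynomial.eval_sub, Polynomial.eval_pow, Polynomial.eval_X,
    Set.mem_setOf_eq, sub_eq_zero] at hx
  exact ⟨x, hx.2, hx.1⟩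




def wb (p : ℕ) : Fin 2 × Fin (2*p) → ℕ := fun x => if x.1 = 0 then 1 else 2*p
def ws (p : ℕ) : Fin 2 × Fin 2 → ℕ := fun x => if x.1 = 0 then 1 else 2*p

noncomputable def m0 (p : ℕ) (q₀ : Fin (2*p)) : (Fin 2 × Fin (2*p)) →₀ ℕ :=
  (∑ r : Fin (2*p), Finsupp.single ((0 : Fin 2), r) 1) + Finsupp.single ((1 : Fin 2), q₀) 1

lemma F_eq (p : ℕ) (q₀ : Fin (2*p)) :
    (∏ r : Fin (2*p), (X ((0:Fin 2), r) : MvPolynomial (Fin 2 × Fin (2*p)) k)) * X ((1:Fin 2), q₀)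
      = monomial (m0 p q₀) 1 := by
  rw [prod_X_monomial Finset.univ (fun r : Fin (2*p) => ((0:Fin 2), r)), X, monomial_mul, one_mul,
    m0]

lemma m0_apply_fst (p : ℕ) (q₀ : Fin (2*p)) (s : Fin (2*p)) : m0 p q₀ ((0:Fin 2), s) = 1 := by
  simp [m0, Finset.sum_apply', Finsupp.single_apply, Prod.ext_iff]

lemma m0_ne (p : ℕ) (q₀ : Fin (2*p)) : m0 p q₀ ≠ 0 := by
  intro h
  have h2 := congrFun (congrArg (DFunLike.coe) h) ((1:Fin 2), q₀)
  simp [m0, Finset.sum_apply', Finsupp.single_apply, Prod.ext_iff] at h2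

lemma weight_m0 (p : ℕ) (q₀ : Fin (2*p)) : Finsupp.weight (wb p) (m0 p q₀) = 4 * p := by
  rw [m0, map_add, map_sum]
  have h1 : ∀ r : Fin (2*p), Finsupp.weight (wb p) (Finsupp.single ((0:Fin 2), r) 1) = 1 := by
    intro r
    rw [Finsupp.weight_apply, Finsupp.sum_single_index] <;> simp [wb]
  have h2 : Finsupp.weight (wb p) (Finsupp.single ((1:Fin 2), q₀) 1) = 2*p := by
    rw [Finsupp.weight_apply, Finsupp.sum_single_index] <;> simp [wb]
  simp only [h1, h2, Finset.sum_const, Finset.card_univ, Fintype.card_fin, smul_eq_mul, mul_one]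
  omega

lemma weight_pos {p : ℕ} (hp : 0 < p) {μ : (Fin 2 × Fin (2*p)) →₀ ℕ} (hμ : μ ≠ 0) :
    0 < Finsupp.weight (wb p) μ := by
  obtain ⟨x, hx⟩ := DFunLike.ne_iff.mp hμ
  have h1 := Finsupp.le_weight_of_ne_zero' (w := wb p) (by simpa using hx)
  have h2 : 1 ≤ wb p x := by unfold wb; split <;> omega
  omega

lemma wh_pow {σ : Type*} {w : σ → ℕ} {φ : MvPolynomial σ k} {m : ℕ}
    (hφ : IsWeightedHomogeneous w φ m) (n : ℕ) : IsWeightedHomogeneous w (φ ^ n) (n * m) := by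
  induction n with
  | zero => simpa using isWeightedHomogeneous_one k w
  | succ n ih =>
    rw [pow_succ, Nat.succ_mul]
    exact ih.mul hφ

lemma aeval_monomial_homog {σ τ : Type*} (ψ : σ → MvPolynomial τ k) (w1 : σ → ℕ) (w2 : τ → ℕ)
    (hψ : ∀ x, IsWeightedHomogeneous w2 (ψ x) (w1 x)) (v : σ →₀ ℕ) (c : k) :
    IsWeightedHomogeneous w2 (aeval ψ (monomial v c)) (Finsupp.weight w1 v) := by
  rw [aeval_monomial]
  have hprod : IsWeightedHomogeneous w2 (v.prod fun x e => ψ x ^ e) (Finsupp.weight w1 v) := by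
    have h := IsWeightedHomogeneous.prod v.support (fun x => ψ x ^ v x)
      (fun x => v x * w1 x) (fun x _ => wh_pow (hψ x) (v x))
    rw [Finsupp.weight_apply, Finsupp.sum]
    simpa [smul_eq_mul, Finsupp.prod] using h
  have h0 : IsWeightedHomogeneous w2 (algebraMap k (MvPolynomial τ k) c) 0 := by
    rw [algebraMap_eq]; exact isWeightedHomogeneous_C _ _
  simpa using h0.mul hprod

lemma coeff_m0_X_pow_mul {p : ℕ} (hp2 : 2 ≤ p) (q₀ : Fin (2*p)) (s : Fin (2*p))
    (Q : MvPolynomial (Fin 2 × Fin (2*p)) k) :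
    coeff (m0 p q₀) ((X ((0:Fin 2), s)) ^ p * Q) = 0 := by
  rw [coeff_mul]
  apply Finset.sum_eq_zero
  rintro ⟨a, b⟩ hab
  rw [Finset.HasAntidiagonal.mem_antidiagonal] at hab
  rw [coeff_X_pow]
  rw [if_neg, zero_mul]
  rintro rfl
  have h2 := congrFun (congrArg (DFunLike.coe) hab) ((0:Fin 2), s)
  simp only [Finsupp.coe_add, Pi.add_apply, Finsupp.single_apply, if_pos rfl,
    m0_apply_fst] at h2
  simp [Finsupp.single_apply] at h2
  omega

lemma char_case {p : ℕ} [CharP k p] (hpp : p.Prime) (q₀ : Fin (2*p)) (cfun : Fin (2*p) → k)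
    (R : MvPolynomial (Fin 2 × Fin (2*p)) k) :
    coeff (m0 p q₀) ((∑ s : Fin (2*p), X ((0:Fin 2), s) * C (cfun s)) ^ p * R) = 0 := by
  haveI : Fact p.Prime := ⟨hpp⟩
  rw [sum_pow_char, Finset.sum_mul, coeff_sum]
  apply Finset.sum_eq_zero
  intro s _
  rw [mul_pow, mul_assoc]
  exact coeff_m0_X_pow_mul hpp.two_le q₀ s _




lemma rowAct_diag {d : ℕ} (h : GL (Fin 2) k) (c₀ c₁ : k)
    (hinv : ((h⁻¹ : GL (Fin 2) k) : Matrix (Fin 2) (Fin 2) k) = Matrix.diagonal ![c₀, c₁]) :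
    (rowAct h : MvPolynomial (Fin 2 × Fin d) k →ₐ[k] MvPolynomial (Fin 2 × Fin d) k)
      = aeval (fun x : Fin 2 × Fin d => C (if x.1 = 0 then c₀ else c₁) * X x) := by
  apply algHom_ext
  rintro ⟨i, q⟩
  rw [rowAct, aeval_X, aeval_X, hinv]
  fin_cases i <;>
    simp [Fin.sum_univ_two, Matrix.diagonal_apply]

noncomputable def torusElt (a : kˣ) (p : ℕ) : GL (Fin 2) k :=
  ⟨Matrix.diagonal ![((a⁻¹ : kˣ) : k), (a : k) ^ (2*p)],
   Matrix.diagonal ![(a : k), ((a⁻¹ : kˣ) : k) ^ (2*p)],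
   by
     rw [Matrix.diagonal_mul_diagonal]
     have hv : (fun i => ![((a⁻¹ : kˣ) : k), (a : k) ^ (2*p)] i * ![(a : k), ((a⁻¹ : kˣ) : k) ^ (2*p)] i)
         = fun _ => (1:k) := by
       funext i
       fin_cases i <;>
         simp [Units.val_inv_eq_inv_val, inv_mul_cancel₀ a.ne_zero, ← mul_pow,
           mul_inv_cancel₀ a.ne_zero]
     rw [hv, Matrix.diagonal_one],
   by
     rw [Matrix.diagonal_mul_diagonal]
     have hv : (fun i => ![(a : k), ((a⁻¹ : kˣ) : k) ^ (2*p)] i * ![((a⁻¹ : kˣ) : k), (a : k) ^ (2*p)] i)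
         = fun _ => (1:k) := by
       funext i
       fin_cases i <;>
         simp [Units.val_inv_eq_inv_val, inv_mul_cancel₀ a.ne_zero, ← mul_pow,
           mul_inv_cancel₀ a.ne_zero]
     rw [hv, Matrix.diagonal_one]⟩

lemma torusElt_mem (a : kˣ) (p : ℕ) : torusElt a p ∈ torusH k p := ⟨a, rfl⟩

lemma torusElt_inv_coe (a : kˣ) (p : ℕ) :
    (((torusElt a p)⁻¹ : GL (Fin 2) k) : Matrix (Fin 2) (Fin 2) k)
      = Matrix.diagonal ![(a : k), ((a⁻¹ : kˣ) : k) ^ (2*p)] := rfl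

lemma inv_support {p : ℕ} [IsAlgClosed k] {f : MvPolynomial (Fin 2 × Fin 2) k}
    (hf : f ∈ HinvAlg (torusH k p)) {v : (Fin 2 × Fin 2) →₀ ℕ} (hv : v ∈ f.support) :
    v ((0:Fin 2),(0:Fin 2)) + v (0,1) = 2 * p * (v (1,0) + v (1,1)) := by
  have hc : coeff v f ≠ 0 := mem_support_iff.mp hv
  set e := v ((0:Fin 2),(0:Fin 2)) + v (0,1) with he
  set m := 2 * p * (v ((1:Fin 2),(0:Fin 2)) + v (1,1)) with hm
  have key : ∀ a : kˣ, (a:k) ^ e = (a:k) ^ m := by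
    intro a
    have h1 := hf (torusElt a p) (torusElt_mem a p)
    rw [rowAct_diag (torusElt a p) ((a:k)) (((a⁻¹ : kˣ):k)^(2*p)) (torusElt_inv_coe a p)] at h1
    have h2 := congrArg (coeff v) h1
    rw [coeff_diag_aeval] at h2
    have h3 : (∏ x : Fin 2 × Fin 2,
        (if x.1 = 0 then (a:k) else ((a⁻¹ : kˣ):k)^(2*p)) ^ v x) = 1 :=
      mul_right_cancel₀ hc (h2.trans (one_mul _).symm)
    rw [Fintype.prod_prod_type] at h3
    simp only [Fin.prod_univ_two, eq_self_iff_true, if_true, if_pos rfl,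
      if_neg (by decide : ¬ ((1:Fin 2) = 0)), Units.val_inv_eq_inv_val] at h3
    have h4 : (a:k) ^ e * ((a:k) ^ m)⁻¹ = 1 := by
      rw [he, hm, ← h3]
      ring
    exact (mul_inv_eq_one₀ (pow_ne_zero m a.ne_zero)).mp h4
  by_contra hne
  obtain ⟨x, hx0, hxne⟩ := exists_pow_ne (k := k) hne
  exact hxne (key (Units.mk0 x hx0))

lemma colAct_jmap {p : ℕ} (hnd : 2 ≤ 2*p) (g : GL (Fin (2*p)) k)
    (f : MvPolynomial (Fin 2 × Fin 2) k) :
    colAct g (jmap hnd f)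
      = aeval (fun x : Fin 2 × Fin 2 => ∑ s : Fin (2*p),
          X (x.1, s) * C ((g : Matrix (Fin (2*p)) (Fin (2*p)) k) s (Fin.castLE hnd x.2))) f := by
  have h : (colAct (n := 2) g).comp (jmap hnd)
      = aeval (fun x : Fin 2 × Fin 2 => ∑ s : Fin (2*p),
          X (x.1, s) * C ((g : Matrix (Fin (2*p)) (Fin (2*p)) k) s (Fin.castLE hnd x.2))) := by
    apply algHom_ext
    intro x
    simp [colAct, jmap]
  exact DFunLike.congr_fun h f

lemma arith1 (a b c d P : ℕ) (h : a + b = 2*P*(c+d)) :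
    a * 1 + b * 1 + (c*(2*P) + d*(2*P)) = 4*P*(c+d) := by
  have h2 : c*(2*P) + d*(2*P) = 2*P*(c+d) := by ring
  rw [mul_one, mul_one, h2, h]; ring

lemma gen_coeff_zero {p : ℕ} [IsAlgClosed k] [CharP k p] (hp : 0 < p) (hnd : 2 ≤ 2*p)
    (g : GL (Fin (2*p)) k) {f : MvPolynomial (Fin 2 × Fin 2) k}
    (hf : f ∈ HinvAlg (torusH k p)) (q₀ : Fin (2*p)) (μ : (Fin 2 × Fin (2*p)) →₀ ℕ)
    (hμ : μ = m0 p q₀ ∨ (μ ≠ 0 ∧ ¬ (4*p ∣ Finsupp.weight (wb p) μ))) :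
    coeff μ (colAct g (jmap hnd f)) = 0 := by
  haveI : NeZero p := ⟨hp.ne'⟩
  have hpp : p.Prime := (CharP.char_is_prime_of_pos k p).out
  rw [colAct_jmap hnd g f]
  set ψ : Fin 2 × Fin 2 → MvPolynomial (Fin 2 × Fin (2*p)) k := fun x => ∑ s : Fin (2*p),
    X (x.1, s) * C ((g : Matrix (Fin (2*p)) (Fin (2*p)) k) s (Fin.castLE hnd x.2)) with hψdef
  conv_lhs => rw [f.as_sum]
  rw [map_sum, coeff_sum]
  apply Finset.sum_eq_zero
  intro v hv
  have hψhom : ∀ x, IsWeightedHomogeneous (wb p) (ψ x) (ws p x) := by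
    intro x
    apply IsWeightedHomogeneous.sum
    intro s _
    have h1 := (isWeightedHomogeneous_X k (wb p) (x.1, s)).mul
      (isWeightedHomogeneous_C (wb p)
        ((g : Matrix (Fin (2*p)) (Fin (2*p)) k) s (Fin.castLE hnd x.2)))
    have h2 : wb p (x.1, s) + 0 = ws p x := by simp [wb, ws]
    rwa [h2] at h1
  have hterm := aeval_monomial_homog ψ (ws p) (wb p) hψhom v (coeff v f)
  have he := inv_support hf hv
  have hwv : Finsupp.weight (ws p) v = 4 * p * (v ((1:Fin 2),(0:Fin 2)) + v (1,1)) := by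
    rw [Finsupp.weight_apply, Finsupp.sum_fintype v (fun i c => c • ws p i) (fun i => by simp)]
    rw [Fintype.sum_prod_type]
    simp only [Fin.sum_univ_two, smul_eq_mul, ws, eq_self_iff_true, if_true, if_pos rfl,
      if_neg (by decide : ¬ ((1:Fin 2) = 0))]
    exact arith1 _ _ _ _ p he
  rcases hμ with rfl | ⟨hμ0, hdvd⟩
  · by_cases h1 : v ((1:Fin 2),(0:Fin 2)) + v (1,1) = 1
    · rw [h1, mul_one] at he
      have hj2 : p ≤ v ((0:Fin 2),(0:Fin 2)) ∨ p ≤ v ((0:Fin 2),(1:Fin 2)) := by omega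
      obtain ⟨j, hj⟩ : ∃ j : Fin 2, p ≤ v ((0:Fin 2), j) := by
        rcases hj2 with h | h
        exacts [⟨0, h⟩, ⟨1, h⟩]
      obtain ⟨u, hu⟩ : ∃ u, v ((0:Fin 2), j) = p + u := ⟨_, (Nat.add_sub_cancel' hj).symm⟩
      rw [aeval_monomial, Finsupp.prod_fintype _ _ (fun _ => pow_zero _),
        ← Finset.mul_prod_erase Finset.univ _ (Finset.mem_univ ((0:Fin 2), j)), hu, pow_add]
      rw [show ∀ A B D : MvPolynomial (Fin 2 × Fin (2*p)) k,
          A * (B ^ p * B ^ u * D) = B ^ p * (A * (B ^ u * D)) from fun A B D => by ring]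
      exact char_case hpp q₀ _ _
    · apply hterm.coeff_eq_zero
      rw [weight_m0, hwv]
      intro hcon
      have h4 := Nat.eq_of_mul_eq_mul_left (show 0 < 4*p by omega)
        (show 4*p*1 = 4*p*(v ((1:Fin 2),(0:Fin 2)) + v (1,1)) by rw [mul_one]; exact hcon)
      omega
  · apply hterm.coeff_eq_zero
    rw [hwv]
    intro hcon
    exact hdvd ⟨_, hcon⟩

end Stmt9Aux

open Stmt9Aux in
/-- The Example of §2: for `char k = p > 0`, `n = 2`, `d = 2p` and `H` the torus
`{diag(a⁻¹, a^{2p})}`, the invariant `F = x₁⋯x_{2p}·y_{2p}` is not a polarized invariant, so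
`^H k[M_{2,2p}] ⊋ GL_{2p} * j(^H k[M_{2,2}])`. -/
theorem stmt9 {k : Type*} [Field k] [IsAlgClosed k] {p : ℕ} [CharP k p] (hp : 0 < p) :
    (∏ r : Fin (2 * p), X ((0 : Fin 2), r)) *
        X ((1 : Fin 2), (⟨2 * p - 1, by omega⟩ : Fin (2 * p))) ∈
      HinvAlg (torusH k p) ∧
    (∏ r : Fin (2 * p), X ((0 : Fin 2), r)) *
        X ((1 : Fin 2), (⟨2 * p - 1, by omega⟩ : Fin (2 * p))) ∉
      polarized (show 2 ≤ 2 * p by omega) (torusH k p) := by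
  constructor
  · rintro h ⟨a, hA⟩
    have hinv : ((h⁻¹ : GL (Fin 2) k) : Matrix (Fin 2) (Fin 2) k)
        = Matrix.diagonal ![(a:k), (((a:k))^(2*p))⁻¹] := by
      rw [Matrix.coe_units_inv, hA]
      apply Matrix.inv_eq_right_inv
      rw [Matrix.diagonal_mul_diagonal]
      have hv : (fun i => ![((a⁻¹:kˣ):k), (a:k)^(2*p)] i * ![(a:k), (((a:k))^(2*p))⁻¹] i)
          = fun _ => (1:k) := by
        funext i
        fin_cases i <;>
          simp [Units.val_inv_eq_inv_val, inv_mul_cancel₀ a.ne_zero,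
            mul_inv_cancel₀ (pow_ne_zero (2*p) a.ne_zero)]
      rw [hv, Matrix.diagonal_one]
    rw [rowAct_diag h ((a:k)) ((((a:k))^(2*p))⁻¹) hinv, map_mul, map_prod]
    simp only [aeval_X]
    norm_num
    rw [Finset.prod_mul_distrib, Finset.prod_const, Finset.card_univ, Fintype.card_fin,
      ← map_pow, mul_mul_mul_comm, ← map_mul,
      mul_inv_cancel₀ (pow_ne_zero (2*p) a.ne_zero), map_one, one_mul]
  · intro hmem
    set q₀ : Fin (2*p) := (⟨2 * p - 1, by omega⟩ : Fin (2 * p)) with hq₀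
    have key : ∀ P, P ∈ polarized (show 2 ≤ 2 * p by omega) (torusH k p) →
        ∀ μ : (Fin 2 × Fin (2*p)) →₀ ℕ,
        (∃ ν, μ + ν = m0 p q₀) →
        (μ = m0 p q₀ ∨ (μ ≠ 0 ∧ ¬ (4*p ∣ Finsupp.weight (wb p) μ))) → coeff μ P = 0 := by
      intro P hP
      induction hP using Algebra.adjoin_induction with
      | mem x hx =>
        obtain ⟨g, f, hf, rfl⟩ := hx
        intro μ _ hμ
        exact gen_coeff_zero hp _ g hf q₀ μ hμ
      | algebraMap r =>
        intro μ _ hμ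
        rw [algebraMap_eq, coeff_C, if_neg]
        rintro rfl
        rcases hμ with h | ⟨h0, _⟩
        · exact m0_ne p q₀ h.symm
        · exact h0 rfl
      | add x y hx hy ihx ihy =>
        intro μ hex hμ
        rw [coeff_add, ihx μ hex hμ, ihy μ hex hμ, add_zero]
      | mul x y hx hy ihx ihy =>
        intro μ hex hμ
        obtain ⟨ν, hν⟩ := hex
        rw [coeff_mul]
        apply Finset.sum_eq_zero
        rintro ⟨a, b⟩ hab
        rw [Finset.HasAntidiagonal.mem_antidiagonal] at hab
        have hwab : Finsupp.weight (wb p) a + Finsupp.weight (wb p) b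
            = Finsupp.weight (wb p) μ := by rw [← map_add, hab]
        rcases hμ with rfl | ⟨hμ0, hdvd⟩
        · by_cases ha0 : a = 0
          · subst ha0
            rw [zero_add] at hab
            subst hab
            rw [ihy (m0 p q₀) ⟨0, add_zero _⟩ (Or.inl rfl), mul_zero]
          · by_cases hb0 : b = 0
            · subst hb0
              rw [add_zero] at hab
              subst hab
              rw [ihx (m0 p q₀) ⟨0, add_zero _⟩ (Or.inl rfl), zero_mul]
            · have hwa := weight_pos hp ha0
              have hwb := weight_pos hp hb0
              have hwm := weight_m0 p q₀
              have hnd2 : ¬ (4*p ∣ Finsupp.weight (wb p) a) := by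
                intro hd
                have := Nat.le_of_dvd hwa hd
                omega
              rw [ihx a ⟨b + ν, by rw [← add_assoc, hab, hν]⟩ (Or.inr ⟨ha0, hnd2⟩), zero_mul]
        · by_cases ha0 : a = 0
          · subst ha0
            rw [zero_add] at hab
            subst hab
            rw [ihy b ⟨ν, hν⟩ (Or.inr ⟨hμ0, hdvd⟩), mul_zero]
          · by_cases hda : 4*p ∣ Finsupp.weight (wb p) a
            · have hdb : ¬ (4*p ∣ Finsupp.weight (wb p) b) := by
                intro hd
                exact hdvd (hwab ▸ dvd_add hda hd)
              have hb0 : b ≠ 0 := by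
                rintro rfl
                exact hdb (by simp)
              rw [ihy b ⟨a + ν, by rw [← add_assoc, add_comm b a, hab, hν]⟩
                (Or.inr ⟨hb0, hdb⟩), mul_zero]
            · rw [ihx a ⟨b + ν, by rw [← add_assoc, hab, hν]⟩ (Or.inr ⟨ha0, hda⟩), zero_mul]
    have h1 := key _ hmem (m0 p q₀) ⟨0, add_zero _⟩ (Or.inl rfl)
    rw [F_eq, coeff_monomial, if_pos rfl] at h1
    exact one_ne_zero h1
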